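/- arXiv:1108.1102 — 2 statements merged into one kernel-verified Lean document; each statement's English description precedes it below -/
import Mathlib

section
/- Let k ≥ 2 and r ≥ 1 be integers, and let G be a graph. If m(G) < r - (r-1)/max{k, 2r+1}, then m₁(G,k) ≤ r, where m₁(G,k) := max over subgraphs H ⊆ G with v(H) ≥ k of e(H)/(v(H)-1). -/
/-- if `m(G) < r - (r-1)/max{k, 2r+1}`, then `m₁(G,k) ≤ r`, i.e. every
subgraph `H ⊆ G` with `v(H) ≥ k` satisfies `e(H)/(v(H)-1) ≤ r`. -/
theorem stmt4 {V : Type*} [Fintype V] (G : SimpleGraph V) (k r : ℕ) (hk : 2 ≤ k) (hr : 1 ≤ r)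
    (h : ∀ H : G.Subgraph, H.verts.Nonempty →
      (H.edgeSet.ncard : ℚ) / (H.verts.ncard : ℚ)
        < (r : ℚ) - ((r : ℚ) - 1) / ((max k (2 * r + 1) : ℕ) : ℚ)) :
    ∀ H : G.Subgraph, k ≤ H.verts.ncard →
      (H.edgeSet.ncard : ℚ) / ((H.verts.ncard : ℚ) - 1) ≤ (r : ℚ) := by
  classical
  intro H hv
  set v := H.verts.ncard with hvdef
  set e := H.edgeSet.ncard with hedef
  have hv2 : 2 ≤ v := hk.trans hv
  -- edge count bound by choose 2
  have hchoose : e ≤ v.choose 2 := by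
    have hinj : Function.Injective (Sym2.map ((↑) : H.verts → V)) :=
      Sym2.map.injective Subtype.coe_injective
    have h1 : e = H.coe.edgeSet.ncard := by
      rw [hedef, ← H.image_coe_edgeSet_coe, Set.ncard_image_of_injective _ hinj]
    have h2 : H.coe.edgeSet.ncard = H.coe.edgeFinset.card := by
      rw [Set.ncard_eq_toFinset_card', SimpleGraph.edgeFinset]
    have h3 : Fintype.card H.verts = v := by
      rw [hvdef, Set.ncard_eq_toFinset_card']
      simp [Set.toFinset_card]
    calc e = H.coe.edgeFinset.card := by rw [h1, h2]
    _ ≤ (Fintype.card H.verts).choose 2 := SimpleGraph.card_edgeFinset_le_card_choose_two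
    _ = v.choose 2 := by rw [h3]
  -- main natural-number bound
  have key : e ≤ r * (v - 1) := by
    rcases le_or_gt v (2 * r) with hle | hgt
    · calc e ≤ v.choose 2 := hchoose
      _ = v * (v - 1) / 2 := Nat.choose_two_right v
      _ ≤ 2 * r * (v - 1) / 2 := by
          apply Nat.div_le_div_right
          exact Nat.mul_le_mul_right _ hle
      _ = r * (v - 1) := by
          rw [mul_assoc, Nat.mul_div_cancel_left _ (by norm_num)]
    · -- v ≥ 2r+1 and v ≥ k, so v ≥ M
      set M : ℕ := max k (2 * r + 1) with hM
      have hMv : M ≤ v := max_le hv hgt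
      have hMpos : 0 < M := by have := le_max_right k (2 * r + 1); omega
      have hne : H.verts.Nonempty := by
        rw [← Set.ncard_pos (Set.toFinite _)]; omega
      have hh := h H hne
      have hvQ : (0 : ℚ) < (v : ℚ) := by exact_mod_cast (by omega : 0 < v)
      have hMQ : (0 : ℚ) < (M : ℚ) := by exact_mod_cast hMpos
      rw [div_lt_iff₀ hvQ] at hh
      have h4 : ((r : ℚ) - 1) / (M : ℚ) * (v : ℚ) ≥ (r : ℚ) - 1 := by
        rw [div_mul_eq_mul_div, ge_iff_le, le_div_iff₀ hMQ]
        have hr1 : (1:ℚ) ≤ (r:ℚ) := by exact_mod_cast hr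
        apply mul_le_mul_of_nonneg_left _ (by linarith : (0:ℚ) ≤ (r:ℚ) - 1)
        exact_mod_cast hMv
      have h5 : (e : ℚ) < (r : ℚ) * (v : ℚ) - ((r : ℚ) - 1) := by
        have := hh
        nlinarith [h4]
      have h6 : (e : ℚ) < (r * (v - 1) : ℕ) + 1 := by
        have : ((r * (v - 1) : ℕ) : ℚ) = (r : ℚ) * ((v : ℚ) - 1) := by
          push_cast [Nat.cast_sub (by omega : 1 ≤ v)]
          ring
        rw [this]
        nlinarith
      exact_mod_cast Nat.lt_add_one_iff.mp (by exact_mod_cast h6)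
  -- conclude
  have hv1 : (0 : ℚ) < (v : ℚ) - 1 := by
    have : (2 : ℚ) ≤ (v : ℚ) := by exact_mod_cast hv2
    linarith
  rw [div_le_iff₀ hv1]
  have : ((r * (v - 1) : ℕ) : ℚ) = (r : ℚ) * ((v : ℚ) - 1) := by
    push_cast [Nat.cast_sub (by omega : 1 ≤ v)]
    ring
  calc (e : ℚ) ≤ ((r * (v - 1) : ℕ) : ℚ) := by exact_mod_cast key
  _ = (r : ℚ) * ((v : ℚ) - 1) := this
end

section
/- Let a ≥ 2 and b ≥ (a-1)² + 1. Suppose the edges of a graph G are partitioned into a-1 forests F₁,...,F_{a-1}. Then G contains no K_{a,b} as a subgraph. -/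
open Finset

private lemma acyclic_of_emb {V W : Type*} {G : SimpleGraph V} {H : SimpleGraph W}
    (f : G ↪g H) (h : H.IsAcyclic) : G.IsAcyclic := by
  intro v c hc
  exact h (c.map f.toHom) (hc.map f.injective)

/-- A finite nonempty acyclic graph has at most `card V - 1` edges. -/
private lemma forest_edge_bound :
    ∀ (n : ℕ) (V : Type) [Fintype V] (G : SimpleGraph V) [DecidableRel G.Adj]
      [Nonempty V], Fintype.card V ≤ n → G.IsAcyclic →
      G.edgeFinset.card + 1 ≤ Fintype.card V := by
  intro n
  induction n with
  | zero =>
    intro V _ G _ _ hcard _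
    exact absurd (Fintype.card_pos (α := V)) (by omega)
  | succ n ih =>
    intro V _ G _ _ hcard hG
    classical
    by_cases hc : G.Connected
    · exact le_of_eq (SimpleGraph.IsTree.card_edgeFinset ⟨hc, hG⟩)
    · rw [SimpleGraph.connected_iff] at hc
      push_neg at hc
      have hpre : ¬ G.Preconnected := fun h => by haveI := hc h; exact IsEmpty.false (α := V) (Classical.arbitrary V)
      rw [SimpleGraph.Preconnected] at hpre
      push_neg at hpre
      obtain ⟨v, w, hvw⟩ := hpre
      set S : Set V := {u | G.Reachable v u} with hS
      haveI : Nonempty ↥S := ⟨⟨v, SimpleGraph.Reachable.refl v⟩⟩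
      haveI : Nonempty ↥Sᶜ := ⟨⟨w, hvw⟩⟩
      -- the two induced subgraphs
      set G1 := G.induce S with hG1
      set G2 := G.induce Sᶜ with hG2
      have hG1a : G1.IsAcyclic := acyclic_of_emb (SimpleGraph.Embedding.induce S) hG
      have hG2a : G2.IsAcyclic := acyclic_of_emb (SimpleGraph.Embedding.induce Sᶜ) hG
      -- closure properties
      have hmemS : ∀ {x y : V}, G.Adj x y → x ∈ S → y ∈ S := fun hxy hx =>
        hx.trans hxy.reachable
      -- dart injection
      have hdart : Fintype.card G.Dart ≤ Fintype.card G1.Dart + Fintype.card G2.Dart := by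
        rw [← Fintype.card_sum]
        apply Fintype.card_le_of_injective
          (fun d => if h : d.fst ∈ S then
              Sum.inl ⟨(⟨d.fst, h⟩, ⟨d.snd, hmemS d.adj h⟩), by
                simp [hG1, d.adj]⟩
            else
              Sum.inr ⟨(⟨d.fst, h⟩, ⟨d.snd, fun h' => h (hmemS d.adj.symm h')⟩), by
                simp [hG2, d.adj]⟩)
        intro d d' hdd
        by_cases h : d.fst ∈ S <;> by_cases h' : d'.fst ∈ S <;>
          simp only [h, h', dif_pos, dif_neg, not_false_iff] at hdd <;>
          first
          | (have h2 := congrArg SimpleGraph.Dart.toProd (Sum.inl.inj hdd)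
             rw [Prod.ext_iff] at h2
             apply SimpleGraph.Dart.ext
             rw [Prod.ext_iff]
             exact ⟨congrArg Subtype.val h2.1, congrArg Subtype.val h2.2⟩)
          | (have h2 := congrArg SimpleGraph.Dart.toProd (Sum.inr.inj hdd)
             rw [Prod.ext_iff] at h2
             apply SimpleGraph.Dart.ext
             rw [Prod.ext_iff]
             exact ⟨congrArg Subtype.val h2.1, congrArg Subtype.val h2.2⟩)
          | exact absurd hdd (by simp)
      rw [SimpleGraph.dart_card_eq_twice_card_edges,
        SimpleGraph.dart_card_eq_twice_card_edges,
        SimpleGraph.dart_card_eq_twice_card_edges] at hdart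
      -- cardinalities of the parts
      have hlt : Fintype.card ↥S < Fintype.card V := Fintype.card_subtype_lt (x := w) hvw
      have hlt' : Fintype.card ↥Sᶜ < Fintype.card V :=
        Fintype.card_subtype_lt (x := v)
          (by simp only [Set.mem_compl_iff, not_not, hS, Set.mem_setOf_eq]
              exact SimpleGraph.Reachable.refl v)
      have hsum : Fintype.card ↥Sᶜ = Fintype.card V - Fintype.card ↥S :=
        Fintype.card_compl_set S
      have h1 := ih ↥S G1 (by omega) hG1a
      have h2 := ih ↥Sᶜ G2 (by omega) hG2a
      omega

theorem stmt9_aux {a b : ℕ} (ha : 2 ≤ a) (hb : (a - 1) ^ 2 + 1 ≤ b)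
    (H : Fin (a - 1) → SimpleGraph (Fin a ⊕ Fin b))
    (hacyc : ∀ i, (H i).IsAcyclic)
    (hcov : ∀ x y, (completeBipartiteGraph (Fin a) (Fin b)).Adj x y → ∃ i, (H i).Adj x y) :
    False := by
  classical
  set K := completeBipartiteGraph (Fin a) (Fin b) with hK
  haveI : Nonempty (Fin a ⊕ Fin b) := ⟨Sum.inl ⟨0, by omega⟩⟩
  have hcW : Fintype.card (Fin a ⊕ Fin b) = a + b := by simp
  -- each forest has at most a + b - 1 edges
  have hFi : ∀ i, (H i).edgeFinset.card + 1 ≤ a + b := by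
    intro i
    have := forest_edge_bound (a + b) (Fin a ⊕ Fin b) (H i) (le_of_eq hcW) (hacyc i)
    omega
  -- K has at least a*b edges
  have hKcard : a * b ≤ K.edgeFinset.card := by
    have : (Finset.univ : Finset (Fin a × Fin b)).card ≤ K.edgeFinset.card := by
      apply Finset.card_le_card_of_injOn (fun p => s(Sum.inl p.1, Sum.inr p.2))
      · intro p _
        simp [SimpleGraph.mem_edgeFinset, hK]
      · intro p _ q _ hpq
        simp only [Sym2.eq, Sym2.rel_iff', Prod.mk.injEq, Prod.swap_prod_mk] at hpq
        rcases hpq with ⟨h1, h2⟩ | ⟨h1, h2⟩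
        · exact Prod.ext (Sum.inl.inj h1) (Sum.inr.inj h2)
        · exact absurd h1 (by simp)
    simpa using this
  -- K's edges are covered by the forests
  have hsub : K.edgeFinset ⊆ Finset.univ.biUnion (fun i => (H i).edgeFinset) := by
    intro e he
    rw [SimpleGraph.mem_edgeFinset] at he
    induction e with
    | _ x y =>
      obtain ⟨i, hi⟩ := hcov x y he
      exact Finset.mem_biUnion.2 ⟨i, Finset.mem_univ i, by
        rw [SimpleGraph.mem_edgeFinset]; exact hi⟩
  have hcount : K.edgeFinset.card ≤ (a - 1) * (a + b - 1) :=
    calc K.edgeFinset.card ≤ (Finset.univ.biUnion (fun i => (H i).edgeFinset)).card :=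
          Finset.card_le_card hsub
      _ ≤ ∑ i, (H i).edgeFinset.card := Finset.card_biUnion_le
      _ ≤ ∑ _i : Fin (a - 1), (a + b - 1) := Finset.sum_le_sum (fun i _ => by
            have := hFi i; omega)
      _ = (a - 1) * (a + b - 1) := by simp [mul_comm]
  obtain ⟨c, rfl⟩ : ∃ c, a = c + 2 := ⟨a - 2, by omega⟩
  have h1 : (c + 2) * b ≤ (c + 1) * (c + b + 1) := by
    have e1 : c + 2 - 1 = c + 1 := by omega
    have e2 : c + 2 + b - 1 = c + b + 1 := by omega
    calc (c + 2) * b ≤ K.edgeFinset.card := hKcard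
      _ ≤ (c + 2 - 1) * (c + 2 + b - 1) := hcount
      _ = (c + 1) * (c + b + 1) := by rw [e1, e2]
  have h2 : (c + 2 - 1) ^ 2 + 1 ≤ b := hb
  have h3 : (c + 1) ^ 2 + 1 ≤ b := by simpa using h2
  nlinarith

/-- if `a ≥ 2`, `b ≥ (a-1)² + 1`, and the edges of `G` are partitioned into
`a-1` forests, then `G` contains no `K_{a,b}` as a subgraph. -/
theorem stmt9 {V : Type*} [Fintype V] (G : SimpleGraph V) (a b : ℕ)
    (ha : 2 ≤ a) (hb : (a - 1) ^ 2 + 1 ≤ b)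
    (F : Fin (a - 1) → SimpleGraph V)
    (hle : ∀ i, F i ≤ G)
    (hforest : ∀ i, (F i).IsAcyclic)
    (hcover : ∀ e : Sym2 V, e ∈ G.edgeSet ↔ ∃ i, e ∈ (F i).edgeSet)
    (hdisj : ∀ i j, i ≠ j → Disjoint (F i).edgeSet (F j).edgeSet) :
    ¬ ∃ f : (Fin a ⊕ Fin b) ↪ V, ∀ x y,
      (completeBipartiteGraph (Fin a) (Fin b)).Adj x y → G.Adj (f x) (f y) := by
  rintro ⟨f, hf⟩
  apply stmt9_aux ha hb (fun i => (F i).comap f)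
  · intro i
    exact acyclic_of_emb (SimpleGraph.Embedding.comap f (F i)) (hforest i)
  · intro x y hxy
    have hadj : G.Adj (f x) (f y) := hf x y hxy
    obtain ⟨i, hi⟩ := (hcover s(f x, f y)).1 hadj
    exact ⟨i, hi⟩
end
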